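/- (Exponential tails and variance of the resampling density.) Let V be in the class 𝒞. There exist constants α, C > 0 such that for all s ≥ 0 and all b, c ∈ ℝ: ∫_{max(b,c)+s}^{∞} ρ_{b,c}(u) du ≤ C·e^{−αs} and ∫_{−∞}^{min(b,c)−s} ρ_{b,c}(u) du ≤ C·e^{−αs}. Moreover, there exists a constant C' > 0 such that for all b, c ∈ ℝ, ∫_ℝ (u − (b+c)/2)² ρ_{b,c}(u) du ≤ C'·(|b−c|+1)². -/

import Mathlib

open MeasureTheory Filter Real

noncomputable section

/-- The class 𝒞 of potentials: convex, at most polynomial growth, non-affine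
(the asymptotic slopes at `+∞` and `-∞`, taken in the extended reals, differ). -/
structure InClassC (V : ℝ → ℝ) : Prop where
  convex : ConvexOn ℝ Set.univ V
  growth : ∃ C > (0 : ℝ), ∃ K : ℝ, 1 ≤ K ∧ ∀ x : ℝ, |V x| ≤ C * (1 + |x|) ^ K
  slopes : ∃ vm vp : EReal,
    Tendsto (fun x : ℝ => ((V x / x : ℝ) : EReal)) atBot (nhds vm) ∧
    Tendsto (fun x : ℝ => ((V x / x : ℝ) : EReal)) atTop (nhds vp) ∧
    vm < vp

/-- The resampling density `ρ_{b,c}`. -/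
def rho (V : ℝ → ℝ) (b c u : ℝ) : ℝ :=
  Real.exp (-(V (u - b) + V (c - u))) / ∫ s : ℝ, Real.exp (-(V (s - b) + V (c - s)))

namespace RSAux
open Set

/-! Reflection helpers -/

lemma reflect_mp (k : ℝ) : MeasurePreserving (fun x : ℝ => k - x) volume volume :=
  Measure.measurePreserving_sub_left volume k

lemma reflect_emb (k : ℝ) : MeasurableEmbedding (fun x : ℝ => k - x) :=
  (MeasurableEquiv.subLeft k).measurableEmbedding

lemma reflect_preimage (k t : ℝ) : (fun x : ℝ => k - x) ⁻¹' Ici t = Iic (k - t) := by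
  ext x
  simp only [mem_preimage, mem_Ici, mem_Iic]
  constructor <;> intro h <;> linarith

lemma setIntegral_reflect (g : ℝ → ℝ) (k a : ℝ) :
    ∫ x in Iic a, g (k - x) = ∫ x in Ici (k - a), g x := by
  have h := (reflect_mp k).setIntegral_preimage_emb (reflect_emb k) g (Ici (k - a))
  rw [reflect_preimage] at h
  rw [show k - (k - a) = a by ring] at h
  exact h

lemma integrableOn_reflect {g : ℝ → ℝ} {k a : ℝ} (h : IntegrableOn g (Ici (k - a))) :
    IntegrableOn (fun x => g (k - x)) (Iic a) := by
  have h2 := ((reflect_mp k).integrableOn_comp_preimage (reflect_emb k)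
    (f := g) (s := Ici (k - a))).mpr h
  rw [reflect_preimage, show k - (k - a) = a by ring] at h2
  exact h2

lemma sq_le_exp {y : ℝ} (hy : 0 ≤ y) : y ^ 2 ≤ 4 * Real.exp y := by
  have h1 : y / 2 + 1 ≤ Real.exp (y / 2) := Real.add_one_le_exp _
  have h2 : Real.exp y = Real.exp (y / 2) * Real.exp (y / 2) := by
    rw [← Real.exp_add]; ring_nf
  nlinarith [Real.exp_pos (y / 2)]

lemma exp_tail_integral {k : ℝ} (hk : 0 < k) (t : ℝ) :
    ∫ u in Ici t, Real.exp (-(k * (u - t))) = 1 / k := by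
  rw [integral_Ici_eq_integral_Ioi]
  have hder : ∀ x ∈ Ici t, HasDerivAt (fun u : ℝ => -(Real.exp (-(k * (u - t))) / k))
      (Real.exp (-(k * (x - t)))) x := by
    intro x _
    have h1 : HasDerivAt (fun u : ℝ => -(k * (u - t))) (-k) x := by
      have := ((hasDerivAt_id x).sub_const t).const_mul (-k)
      simpa [neg_mul] using this
    have h2 := (h1.exp).div_const k
    have h3 : HasDerivAt (fun u : ℝ => -(Real.exp (-(k * (u - t))) / k))
        (-(Real.exp (-(k * (x - t))) * -k / k)) x := h2.neg
    convert h3 using 1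
    field_simp [hk.ne']
  have hint : IntegrableOn (fun u : ℝ => Real.exp (-(k * (u - t)))) (Ioi t) := by
    have h5 : IntegrableOn (fun x : ℝ => Real.exp (k * t) * Real.exp (-k * x)) (Ioi t) :=
      (exp_neg_integrableOn_Ioi t hk).const_mul _
    refine h5.congr_fun (fun x _ => ?_) measurableSet_Ioi
    dsimp only; rw [← Real.exp_add]; ring_nf
  have htend : Tendsto (fun u : ℝ => -(Real.exp (-(k * (u - t))) / k)) atTop (nhds 0) := by
    have h0 : Tendsto (fun u : ℝ => u - t) atTop atTop := by
      simpa [sub_eq_add_neg] using tendsto_atTop_add_const_right atTop (-t) tendsto_id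
    have h1 : Tendsto (fun u : ℝ => -(k * (u - t))) atTop atBot :=
      tendsto_neg_atTop_atBot.comp (h0.const_mul_atTop hk)
    have h2 : Tendsto (fun u : ℝ => Real.exp (-(k * (u - t)))) atTop (nhds 0) :=
      Real.tendsto_exp_atBot.comp h1
    have h3 := (h2.div_const k).neg
    simpa using h3
  have := integral_Ioi_of_hasDerivAt_of_tendsto'
    (f := fun u : ℝ => -(Real.exp (-(k * (u - t))) / k)) hder hint htend
  rw [this]
  simp [Real.exp_zero]

lemma intOn_exp_shift {k : ℝ} (hk : 0 < k) (t a : ℝ) :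
    IntegrableOn (fun u : ℝ => Real.exp (-(k * (u - a)))) (Ici t) := by
  rw [integrableOn_Ici_iff_integrableOn_Ioi]
  have h5 : IntegrableOn (fun x : ℝ => Real.exp (k * a) * Real.exp (-k * x)) (Ioi t) :=
    (exp_neg_integrableOn_Ioi t hk).const_mul _
  refine h5.congr_fun (fun x _ => ?_) measurableSet_Ioi
  dsimp only; rw [← Real.exp_add]; ring_nf

/-! The double-well potential `w` -/

def w (V : ℝ → ℝ) (b c u : ℝ) : ℝ := V (u - b) + V (c - u)

def Z (V : ℝ → ℝ) (b c : ℝ) : ℝ := ∫ s : ℝ, Real.exp (-(V (s - b) + V (c - s)))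

lemma rho_eq (V : ℝ → ℝ) (b c u : ℝ) :
    rho V b c u = Real.exp (-(w V b c u)) / Z V b c := rfl

lemma w_cont {V : ℝ → ℝ} (hc : Continuous V) (b c : ℝ) : Continuous (w V b c) := by
  unfold w; fun_prop

lemma w_symm (V : ℝ → ℝ) (b c u : ℝ) : w V b c (b + c - u) = w V b c u := by
  unfold w
  rw [show b + c - u - b = c - u by ring, show c - (b + c - u) = u - b by ring]
  ring

lemma rho_symm (V : ℝ → ℝ) (b c u : ℝ) : rho V b c (b + c - u) = rho V b c u := by
  rw [rho_eq, rho_eq, w_symm]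


lemma tail_left_eq (V : ℝ → ℝ) (b c s : ℝ) :
    ∫ u in Iic (min b c - s), rho V b c u = ∫ u in Ici (max b c + s), rho V b c u := by
  calc ∫ u in Iic (min b c - s), rho V b c u
      = ∫ u in Iic (min b c - s), rho V b c (b + c - u) :=
        setIntegral_congr_fun measurableSet_Iic fun x _ => (rho_symm V b c x).symm
    _ = ∫ u in Ici ((b + c) - (min b c - s)), rho V b c u :=
        setIntegral_reflect (rho V b c) (b + c) (min b c - s)
    _ = ∫ u in Ici (max b c + s), rho V b c u := by
        rw [show (b + c) - (min b c - s) = max b c + s by rw [← min_add_max b c]; ring]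

section Core

variable {V : ℝ → ℝ} {p q R : ℝ}

lemma w_gain (Hq : ∀ x y : ℝ, R ≤ x → x ≤ y → q * (y - x) ≤ V y - V x)
    (Hp : ∀ x y : ℝ, y ≤ x → x ≤ -R → p * (y - x) ≤ V y - V x)
    (b c : ℝ) {u v : ℝ} (hu : max b c + R ≤ u) (huv : u ≤ v) :
    (q - p) * (v - u) ≤ w V b c v - w V b c u := by
  have hb : b ≤ max b c := le_max_left b c
  have hcc : c ≤ max b c := le_max_right b c
  have h1 := Hq (u - b) (v - b) (by linarith) (by linarith)
  have h2 := Hp (c - u) (c - v) (by linarith) (by linarith)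
  unfold w
  ring_nf at h1 h2 ⊢
  linarith

variable (Hq : ∀ x y : ℝ, R ≤ x → x ≤ y → q * (y - x) ≤ V y - V x)
    (Hp : ∀ x y : ℝ, y ≤ x → x ≤ -R → p * (y - x) ≤ V y - V x)

include Hq Hp

lemma exp_w_le (b c : ℝ) {t u : ℝ} (ht : max b c + R ≤ t) (htu : t ≤ u) :
    Real.exp (-(w V b c u)) ≤ Real.exp (-(w V b c t)) * Real.exp (-((q - p) * (u - t))) := by
  rw [← Real.exp_add]
  apply Real.exp_le_exp.mpr
  have := w_gain Hq Hp b c ht htu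
  linarith

lemma intOn_Ici (hc : Continuous V) (hpq : p < q) (b c : ℝ) {t : ℝ}
    (ht : max b c + R ≤ t) :
    IntegrableOn (fun u => Real.exp (-(w V b c u))) (Ici t) := by
  have hα : 0 < q - p := sub_pos.mpr hpq
  refine Integrable.mono' ((intOn_exp_shift hα t t).const_mul (Real.exp (-(w V b c t)))) ?_ ?_
  · exact ((w_cont hc b c).neg.rexp).aestronglyMeasurable
  · rw [ae_restrict_iff' measurableSet_Ici]
    refine Eventually.of_forall fun u hu => ?_
    rw [Real.norm_eq_abs, abs_of_pos (Real.exp_pos _)]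
    exact exp_w_le Hq Hp b c ht hu

lemma int_exp_w (hc : Continuous V) (hpq : p < q) (b c : ℝ) :
    Integrable (fun u => Real.exp (-(w V b c u))) := by
  have hIci := intOn_Ici Hq Hp hc hpq b c (t := max b c + R) le_rfl
  have hIic : IntegrableOn (fun u => Real.exp (-(w V b c u))) (Iic (min b c - R)) := by
    have h1 : IntegrableOn (fun u => Real.exp (-(w V b c u)))
        (Ici ((b + c) - (min b c - R))) := by
      rw [show (b + c) - (min b c - R) = max b c + R by rw [← min_add_max b c]; ring]
      exact hIci
    have h2 := integrableOn_reflect (k := b + c) (a := min b c - R) h1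
    refine h2.congr_fun (fun x _ => ?_) measurableSet_Iic
    dsimp only; rw [w_symm]
  have hmid : IntegrableOn (fun u => Real.exp (-(w V b c u)))
      (Icc (min b c - R) (max b c + R)) :=
    ((w_cont hc b c).neg.rexp).integrableOn_Icc
  rw [← integrableOn_univ]
  have huniv : (univ : Set ℝ) =
      Iic (min b c - R) ∪ (Icc (min b c - R) (max b c + R) ∪ Ici (max b c + R)) := by
    ext x
    simp only [mem_univ, mem_union, mem_Iic, mem_Icc, mem_Ici, true_iff]
    by_cases h1 : x ≤ min b c - R
    · exact Or.inl h1
    · by_cases h2 : x ≤ max b c + R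
      · exact Or.inr (Or.inl ⟨by linarith, h2⟩)
      · exact Or.inr (Or.inr (by linarith))
  rw [huniv]
  exact hIic.union (hmid.union hIci)

lemma Z_pos (hc : Continuous V) (hpq : p < q) (b c : ℝ) : 0 < Z V b c := by
  have h := int_exp_w Hq Hp hc hpq b c
  exact integral_exp_pos (f := fun u => -(w V b c u)) h

lemma Z_lb (hc : Continuous V) (hpq : p < q) (b c : ℝ) :
    Real.exp (-(w V b c (max b c + R + 1))) ≤ Z V b c := by
  have hα : 0 < q - p := sub_pos.mpr hpq
  set A := max b c + R with hA
  set B := A + 1 with hB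
  have h1 : ∫ u in Icc A B, Real.exp (-(w V b c B)) ≤ ∫ u in Icc A B, Real.exp (-(w V b c u)) := by
    refine setIntegral_mono_on (integrableOn_const ?_)
      ((intOn_Ici Hq Hp hc hpq b c le_rfl).mono_set Icc_subset_Ici_self)
      measurableSet_Icc ?_
    · rw [Real.volume_Icc]; exact ENNReal.ofReal_ne_top
    · intro u hu
      apply Real.exp_le_exp.mpr
      have := w_gain Hq Hp b c (v := B) (u := u) hu.1 hu.2
      nlinarith [hu.2, hα]
  have h2 : ∫ u in Icc A B, Real.exp (-(w V b c B)) = Real.exp (-(w V b c B)) := by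
    rw [setIntegral_const, Real.volume_real_Icc, show B - A = 1 by rw [hB]; ring]
    simp
  have h3 : ∫ u in Icc A B, Real.exp (-(w V b c u)) ≤ Z V b c :=
    setIntegral_le_integral (int_exp_w Hq Hp hc hpq b c)
      (Eventually.of_forall fun u => (Real.exp_pos _).le)
  calc Real.exp (-(w V b c B)) = ∫ u in Icc A B, Real.exp (-(w V b c B)) := h2.symm
    _ ≤ ∫ u in Icc A B, Real.exp (-(w V b c u)) := h1
    _ ≤ Z V b c := h3

lemma mass_one (hc : Continuous V) (hpq : p < q) (b c : ℝ) :
    ∫ u : ℝ, rho V b c u = 1 := by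
  have hZ := Z_pos Hq Hp hc hpq b c
  simp_rw [rho_eq]
  rw [integral_div]
  exact div_self hZ.ne'

lemma rho_int (hc : Continuous V) (hpq : p < q) (b c : ℝ) :
    Integrable (rho V b c) := by
  have h := (int_exp_w Hq Hp hc hpq b c).div_const (Z V b c)
  exact h

lemma rho_nonneg (hc : Continuous V) (hpq : p < q) (b c : ℝ) (u : ℝ) :
    0 ≤ rho V b c u := by
  rw [rho_eq]
  exact div_nonneg (Real.exp_pos _).le (Z_pos Hq Hp hc hpq b c).le


lemma g_ptwise (hpq : p < q) (b c : ℝ) {u : ℝ} (hu : max b c + R + 1 ≤ u) :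
    (u - (b + c) / 2) ^ 2 * Real.exp (-(w V b c u)) ≤
      Real.exp (-(w V b c (max b c + R + 1))) *
        ((32 / (q - p) ^ 2 + 2 * ((max b c + R + 1) - (b + c) / 2) ^ 2) *
          Real.exp (-((q - p) / 2 * (u - (max b c + R + 1))))) := by
  have hα : 0 < q - p := sub_pos.mpr hpq
  set m : ℝ := (b + c) / 2 with hm
  set B : ℝ := max b c + R + 1 with hB
  have huB : 0 ≤ u - B := by linarith
  have hum : (u - m) ^ 2 ≤ 2 * (u - B) ^ 2 + 2 * (B - m) ^ 2 := by
    nlinarith [sq_nonneg ((u - B) - (B - m))]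
  have h2 : Real.exp (-(w V b c u)) ≤
      Real.exp (-(w V b c B)) * Real.exp (-((q - p) * (u - B))) :=
    exp_w_le Hq Hp b c (by rw [hB]; linarith) hu
  have h3 : (u - B) ^ 2 * Real.exp (-((q - p) * (u - B))) ≤
      (16 / (q - p) ^ 2) * Real.exp (-((q - p) / 2 * (u - B))) := by
    have hy : 0 ≤ (q - p) / 2 * (u - B) := by positivity
    have hs := sq_le_exp hy
    have hsq : (u - B) ^ 2 ≤ 16 / (q - p) ^ 2 * Real.exp ((q - p) / 2 * (u - B)) := by
      rw [div_mul_eq_mul_div, le_div_iff₀ (by positivity : (0:ℝ) < (q - p) ^ 2)]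
      nlinarith [hs]
    calc (u - B) ^ 2 * Real.exp (-((q - p) * (u - B)))
        ≤ (16 / (q - p) ^ 2 * Real.exp ((q - p) / 2 * (u - B))) *
            Real.exp (-((q - p) * (u - B))) :=
          mul_le_mul_of_nonneg_right hsq (Real.exp_pos _).le
      _ = (16 / (q - p) ^ 2) * Real.exp (-((q - p) / 2 * (u - B))) := by
          rw [mul_assoc, ← Real.exp_add]
          congr 2
          ring
  have h4 : Real.exp (-((q - p) * (u - B))) ≤ Real.exp (-((q - p) / 2 * (u - B))) := by
    apply Real.exp_le_exp.mpr
    nlinarith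
  calc (u - m) ^ 2 * Real.exp (-(w V b c u))
      ≤ (2 * (u - B) ^ 2 + 2 * (B - m) ^ 2) *
          (Real.exp (-(w V b c B)) * Real.exp (-((q - p) * (u - B)))) :=
        mul_le_mul hum h2 (Real.exp_pos _).le (by positivity)
    _ = Real.exp (-(w V b c B)) *
          (2 * ((u - B) ^ 2 * Real.exp (-((q - p) * (u - B)))) +
           2 * (B - m) ^ 2 * Real.exp (-((q - p) * (u - B)))) := by ring
    _ ≤ Real.exp (-(w V b c B)) *
          (2 * ((16 / (q - p) ^ 2) * Real.exp (-((q - p) / 2 * (u - B)))) +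
           2 * (B - m) ^ 2 * Real.exp (-((q - p) / 2 * (u - B)))) := by
        apply mul_le_mul_of_nonneg_left _ (Real.exp_pos _).le
        have t1 : 2 * ((u - B) ^ 2 * Real.exp (-((q - p) * (u - B)))) ≤
            2 * ((16 / (q - p) ^ 2) * Real.exp (-((q - p) / 2 * (u - B)))) := by linarith
        have t2 : 2 * (B - m) ^ 2 * Real.exp (-((q - p) * (u - B))) ≤
            2 * (B - m) ^ 2 * Real.exp (-((q - p) / 2 * (u - B))) :=
          mul_le_mul_of_nonneg_left h4 (by positivity)
        linarith
    _ = Real.exp (-(w V b c B)) *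
          ((32 / (q - p) ^ 2 + 2 * (B - m) ^ 2) *
            Real.exp (-((q - p) / 2 * (u - B)))) := by ring

lemma int_g (hc : Continuous V) (hpq : p < q) (b c : ℝ) :
    Integrable (fun u => (u - (b + c) / 2) ^ 2 * Real.exp (-(w V b c u))) := by
  have hα : 0 < q - p := sub_pos.mpr hpq
  have hcg : Continuous (fun u : ℝ => (u - (b + c) / 2) ^ 2 * Real.exp (-(w V b c u))) :=
    ((continuous_id.sub continuous_const).pow 2).mul ((w_cont hc b c).neg.rexp)
  have hIci : IntegrableOn (fun u => (u - (b + c) / 2) ^ 2 * Real.exp (-(w V b c u)))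
      (Ici (max b c + R + 1)) := by
    refine Integrable.mono'
      (((intOn_exp_shift (by positivity : (0:ℝ) < (q - p) / 2) (max b c + R + 1)
        (max b c + R + 1)).const_mul
          (32 / (q - p) ^ 2 + 2 * ((max b c + R + 1) - (b + c) / 2) ^ 2)).const_mul
            (Real.exp (-(w V b c (max b c + R + 1))))) ?_ ?_
    · exact hcg.aestronglyMeasurable
    · rw [ae_restrict_iff' measurableSet_Ici]
      refine Eventually.of_forall fun u hu => ?_
      rw [Real.norm_eq_abs, abs_of_nonneg (by positivity)]
      exact g_ptwise Hq Hp hpq b c hu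
  have hIic : IntegrableOn (fun u => (u - (b + c) / 2) ^ 2 * Real.exp (-(w V b c u)))
      (Iic (min b c - R - 1)) := by
    have h1 : IntegrableOn (fun u => (u - (b + c) / 2) ^ 2 * Real.exp (-(w V b c u)))
        (Ici ((b + c) - (min b c - R - 1))) := by
      rw [show (b + c) - (min b c - R - 1) = max b c + R + 1 by rw [← min_add_max b c]; ring]
      exact hIci
    have h2 := integrableOn_reflect (k := b + c) (a := min b c - R - 1) h1
    refine h2.congr_fun (fun x _ => ?_) measurableSet_Iic
    dsimp only; rw [w_symm, show (b + c) - x - (b + c) / 2 = -(x - (b + c) / 2) by ring, neg_sq]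
  have hmid : IntegrableOn (fun u => (u - (b + c) / 2) ^ 2 * Real.exp (-(w V b c u)))
      (Icc (min b c - R - 1) (max b c + R + 1)) := hcg.integrableOn_Icc
  rw [← integrableOn_univ]
  have huniv : (univ : Set ℝ) = Iic (min b c - R - 1) ∪
      (Icc (min b c - R - 1) (max b c + R + 1) ∪ Ici (max b c + R + 1)) := by
    ext x
    simp only [mem_univ, mem_union, mem_Iic, mem_Icc, mem_Ici, true_iff]
    by_cases h1 : x ≤ min b c - R - 1
    · exact Or.inl h1
    · by_cases h2 : x ≤ max b c + R + 1
      · exact Or.inr (Or.inl ⟨by linarith, h2⟩)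
      · exact Or.inr (Or.inr (by linarith))
  rw [huniv]
  exact hIic.union (hmid.union hIci)

lemma tail_right (hc : Continuous V) (hpq : p < q) (hR : 1 ≤ R) (b c : ℝ) {s : ℝ}
    (hs : 0 ≤ s) :
    ∫ u in Ici (max b c + s), rho V b c u ≤
      (1 + 1 / (q - p)) * Real.exp ((q - p) * (R + 1)) * Real.exp (-(q - p) * s) := by
  have hα : 0 < q - p := sub_pos.mpr hpq
  have hZ0 : 0 < Z V b c := Z_pos Hq Hp hc hpq b c
  rcases le_or_gt s (R + 1) with hsR | hsR
  · have h1 : ∫ u in Ici (max b c + s), rho V b c u ≤ ∫ u, rho V b c u :=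
      setIntegral_le_integral (rho_int Hq Hp hc hpq b c)
        (Eventually.of_forall (rho_nonneg Hq Hp hc hpq b c))
    rw [mass_one Hq Hp hc hpq b c] at h1
    refine h1.trans ?_
    rw [mul_assoc, ← Real.exp_add]
    have e2 : (1:ℝ) ≤ Real.exp ((q - p) * (R + 1) + -(q - p) * s) :=
      Real.one_le_exp (by nlinarith)
    nlinarith [mul_pos (one_div_pos.mpr hα) (Real.exp_pos ((q - p) * (R + 1) + -(q - p) * s))]
  · have hts : max b c + R ≤ max b c + s := by linarith
    have htB : max b c + R ≤ max b c + R + 1 := by linarith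
    have key : ∫ u in Ici (max b c + s), Real.exp (-(w V b c u)) ≤
        Real.exp (-(w V b c (max b c + s))) * (1 / (q - p)) := by
      have hmono := setIntegral_mono_on
        (intOn_Ici Hq Hp hc hpq b c hts)
        ((intOn_exp_shift hα (max b c + s) (max b c + s)).const_mul
          (Real.exp (-(w V b c (max b c + s)))))
        measurableSet_Ici
        (fun u hu => exp_w_le Hq Hp b c hts hu)
      rwa [integral_const_mul, exp_tail_integral hα (max b c + s)] at hmono
    have step2 : Real.exp (-(w V b c (max b c + s))) ≤
        Real.exp (-(w V b c (max b c + R + 1))) * Real.exp (-((q - p) * (s - (R + 1)))) := by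
      have h := exp_w_le Hq Hp b c (t := max b c + R + 1) (u := max b c + s) htB (by linarith)
      rwa [show max b c + s - (max b c + R + 1) = s - (R + 1) by ring] at h
    have hZlb := Z_lb Hq Hp hc hpq b c
    have hE0 : (0:ℝ) < Real.exp (-(w V b c (max b c + R + 1))) := Real.exp_pos _
    calc ∫ u in Ici (max b c + s), rho V b c u
        = (∫ u in Ici (max b c + s), Real.exp (-(w V b c u))) / Z V b c := by
          simp_rw [rho_eq]; rw [integral_div]
      _ ≤ (Real.exp (-(w V b c (max b c + s))) * (1 / (q - p))) / Z V b c := by gcongr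
      _ ≤ (Real.exp (-(w V b c (max b c + R + 1))) * Real.exp (-((q - p) * (s - (R + 1)))) *
            (1 / (q - p))) / Real.exp (-(w V b c (max b c + R + 1))) := by
          apply div_le_div₀ (by positivity) ?_ hE0 hZlb
          exact mul_le_mul_of_nonneg_right step2 (by positivity)
      _ = Real.exp (-((q - p) * (s - (R + 1)))) * (1 / (q - p)) := by
          rw [mul_assoc, mul_div_cancel_left₀ _ hE0.ne']
      _ ≤ (1 + 1 / (q - p)) * Real.exp ((q - p) * (R + 1)) * Real.exp (-(q - p) * s) := by
          have e : Real.exp (-((q - p) * (s - (R + 1)))) =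
              Real.exp ((q - p) * (R + 1)) * Real.exp (-(q - p) * s) := by
            rw [← Real.exp_add]; congr 1; ring
          rw [e]
          nlinarith [mul_pos (Real.exp_pos ((q - p) * (R + 1))) (Real.exp_pos (-(q - p) * s)),
            one_div_pos.mpr hα]

lemma variance_bound (hc : Continuous V) (hpq : p < q) (hR : 1 ≤ R) (b c : ℝ) :
    ∫ u : ℝ, (u - (b + c) / 2) ^ 2 * rho V b c u ≤
      ((R + 1) ^ 2 * (1 + 8 / (q - p)) + 128 / (q - p) ^ 3) * (|b - c| + 1) ^ 2 := by
  have hα : 0 < q - p := sub_pos.mpr hpq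
  have hd : 0 ≤ |b - c| := abs_nonneg _
  have hZ0 : 0 < Z V b c := Z_pos Hq Hp hc hpq b c
  have hZlb := Z_lb Hq Hp hc hpq b c
  have hE0 : (0:ℝ) < Real.exp (-(w V b c (max b c + R + 1))) := Real.exp_pos _
  have hmax : max b c = (b + c) / 2 + |b - c| / 2 := by
    rcases le_total b c with h | h
    · rw [max_eq_right h, abs_of_nonpos (by linarith : b - c ≤ 0)]; ring
    · rw [max_eq_left h, abs_of_nonneg (by linarith : 0 ≤ b - c)]; ring
  have hmin : min b c = (b + c) / 2 - |b - c| / 2 := by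
    rcases le_total b c with h | h
    · rw [min_eq_left h, abs_of_nonpos (by linarith : b - c ≤ 0)]; ring
    · rw [min_eq_right h, abs_of_nonneg (by linarith : 0 ≤ b - c)]; ring
  set m : ℝ := (b + c) / 2 with hm
  set T : ℝ := |b - c| / 2 + R + 1 with hTdef
  have hT0 : 0 < T := by rw [hTdef]; positivity
  have ha1 : m + T = max b c + R + 1 := by rw [hm, hTdef, hmax]; ring
  have ha0 : m - T = min b c - R - 1 := by rw [hm, hTdef, hmin]; ring
  have hBmT : max b c + R + 1 - m = T := by linarith
  -- integrability
  have hg_int : Integrable (fun u => (u - m) ^ 2 * Real.exp (-(w V b c u))) :=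
    int_g Hq Hp hc hpq b c
  have hf_int : Integrable (fun u => (u - m) ^ 2 * rho V b c u) := by
    simp only [rho_eq, ← mul_div_assoc]
    exact hg_int.div_const _
  -- split
  have hsplit : ∫ u : ℝ, (u - m) ^ 2 * rho V b c u =
      (∫ u in Icc (m - T) (m + T), (u - m) ^ 2 * rho V b c u) +
      ∫ u in (Icc (m - T) (m + T))ᶜ, (u - m) ^ 2 * rho V b c u :=
    (integral_add_compl measurableSet_Icc hf_int).symm
  have hcomplset : (Icc (m - T) (m + T))ᶜ = Iio (m - T) ∪ Ioi (m + T) := by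
    ext x
    simp only [mem_compl_iff, mem_Icc, mem_union, mem_Iio, mem_Ioi, not_and_or, not_le]
  have hdisj : Disjoint (Iio (m - T)) (Ioi (m + T)) := by
    apply disjoint_left.mpr
    intro x hx hx'
    simp only [mem_Iio] at hx
    simp only [mem_Ioi] at hx'
    linarith
  have hcompl : ∫ u in (Icc (m - T) (m + T))ᶜ, (u - m) ^ 2 * rho V b c u =
      (∫ u in Iio (m - T), (u - m) ^ 2 * rho V b c u) +
      ∫ u in Ioi (m + T), (u - m) ^ 2 * rho V b c u := by
    rw [hcomplset]
    exact setIntegral_union hdisj measurableSet_Ioi hf_int.integrableOn hf_int.integrableOn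
  -- middle bound
  have hmid : ∫ u in Icc (m - T) (m + T), (u - m) ^ 2 * rho V b c u ≤ T ^ 2 := by
    have h1 : ∫ u in Icc (m - T) (m + T), (u - m) ^ 2 * rho V b c u ≤
        ∫ u in Icc (m - T) (m + T), T ^ 2 * rho V b c u := by
      refine setIntegral_mono_on hf_int.integrableOn
        ((rho_int Hq Hp hc hpq b c).const_mul _).integrableOn measurableSet_Icc ?_
      intro x hx
      have hx1 := hx.1
      have hx2 := hx.2
      have hsq : (x - m) ^ 2 ≤ T ^ 2 := sq_le_sq' (by linarith) (by linarith)
      exact mul_le_mul_of_nonneg_right hsq (rho_nonneg Hq Hp hc hpq b c x)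
    have h2 : ∫ u in Icc (m - T) (m + T), T ^ 2 * rho V b c u =
        T ^ 2 * ∫ u in Icc (m - T) (m + T), rho V b c u := integral_const_mul _ _
    have h3 : ∫ u in Icc (m - T) (m + T), rho V b c u ≤ 1 := by
      have h := setIntegral_le_integral (s := Icc (m - T) (m + T))
        (rho_int Hq Hp hc hpq b c)
        (Eventually.of_forall (rho_nonneg Hq Hp hc hpq b c))
      rwa [mass_one Hq Hp hc hpq b c] at h
    calc ∫ u in Icc (m - T) (m + T), (u - m) ^ 2 * rho V b c u
        ≤ T ^ 2 * ∫ u in Icc (m - T) (m + T), rho V b c u := by rw [← h2]; exact h1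
      _ ≤ T ^ 2 * 1 := mul_le_mul_of_nonneg_left h3 (by positivity)
      _ = T ^ 2 := mul_one _
  -- right tail bound
  have hright : ∫ u in Ici (m + T), (u - m) ^ 2 * rho V b c u ≤
      (32 / (q - p) ^ 2 + 2 * T ^ 2) * (2 / (q - p)) := by
    have hdom : IntegrableOn (fun u : ℝ => Real.exp (-(w V b c (max b c + R + 1))) *
        ((32 / (q - p) ^ 2 + 2 * ((max b c + R + 1) - m) ^ 2) *
          Real.exp (-((q - p) / 2 * (u - (max b c + R + 1)))))) (Ici (max b c + R + 1)) :=
      ((intOn_exp_shift (by positivity : (0:ℝ) < (q - p) / 2) (max b c + R + 1)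
        (max b c + R + 1)).const_mul _).const_mul _
    have hdom2 := hdom.mono_set (by rw [ha1] : Ici (m + T) ⊆ Ici (max b c + R + 1))
    have hmono := setIntegral_mono_on
      (hg_int.integrableOn (s := Ici (m + T)))
      hdom2
      measurableSet_Ici
      (fun u hu => g_ptwise Hq Hp hpq b c (by rw [← ha1]; exact hu))
    have hval : ∫ u in Ici (m + T), Real.exp (-(w V b c (max b c + R + 1))) *
        ((32 / (q - p) ^ 2 + 2 * ((max b c + R + 1) - m) ^ 2) *
          Real.exp (-((q - p) / 2 * (u - (max b c + R + 1))))) =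
        Real.exp (-(w V b c (max b c + R + 1))) *
          ((32 / (q - p) ^ 2 + 2 * T ^ 2) * (2 / (q - p))) := by
      rw [integral_const_mul, integral_const_mul, ha1,
        exp_tail_integral (by positivity : (0:ℝ) < (q - p) / 2) (max b c + R + 1), hBmT,
        one_div_div]
    have h0 : ∫ u in Ici (m + T), (u - m) ^ 2 * rho V b c u =
        (∫ u in Ici (m + T), (u - m) ^ 2 * Real.exp (-(w V b c u))) / Z V b c := by
      simp only [rho_eq, ← mul_div_assoc]; rw [integral_div]
    rw [h0]
    calc (∫ u in Ici (m + T), (u - m) ^ 2 * Real.exp (-(w V b c u))) / Z V b c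
        ≤ (Real.exp (-(w V b c (max b c + R + 1))) *
            ((32 / (q - p) ^ 2 + 2 * T ^ 2) * (2 / (q - p)))) / Z V b c := by
          gcongr
          rw [← hval]
          exact hmono
      _ ≤ (Real.exp (-(w V b c (max b c + R + 1))) *
            ((32 / (q - p) ^ 2 + 2 * T ^ 2) * (2 / (q - p)))) /
            Real.exp (-(w V b c (max b c + R + 1))) := by
          apply div_le_div₀ (by positivity) le_rfl hE0 hZlb
      _ = (32 / (q - p) ^ 2 + 2 * T ^ 2) * (2 / (q - p)) := by
          rw [mul_comm, mul_div_assoc, div_self hE0.ne', mul_one]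
  -- left tail equals right tail
  have hleft : ∫ u in Iio (m - T), (u - m) ^ 2 * rho V b c u =
      ∫ u in Ioi (m + T), (u - m) ^ 2 * rho V b c u := by
    have hsymmf : ∀ x : ℝ, ((b + c - x) - m) ^ 2 * rho V b c (b + c - x) =
        (x - m) ^ 2 * rho V b c x := by
      intro x
      rw [rho_symm, show b + c - x - m = -(x - m) by rw [hm]; ring, neg_sq]
    calc ∫ u in Iio (m - T), (u - m) ^ 2 * rho V b c u
        = ∫ u in Iic (m - T), (u - m) ^ 2 * rho V b c u :=
          setIntegral_congr_set Iio_ae_eq_Iic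
      _ = ∫ u in Iic (m - T), ((b + c - u) - m) ^ 2 * rho V b c (b + c - u) :=
          (setIntegral_congr_fun measurableSet_Iic fun x _ => (hsymmf x).symm :)
      _ = ∫ u in Ici ((b + c) - (m - T)), (u - m) ^ 2 * rho V b c u :=
          setIntegral_reflect (fun u => (u - m) ^ 2 * rho V b c u) (b + c) (m - T)
      _ = ∫ u in Ici (m + T), (u - m) ^ 2 * rho V b c u := by
          rw [show (b + c) - (m - T) = m + T by rw [hm]; ring]
      _ = ∫ u in Ioi (m + T), (u - m) ^ 2 * rho V b c u := integral_Ici_eq_integral_Ioi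
  -- assemble
  rw [hsplit, hcompl, hleft, ← integral_Ici_eq_integral_Ioi]
  have htotal : (∫ u in Icc (m - T) (m + T), (u - m) ^ 2 * rho V b c u) +
      ((∫ u in Ici (m + T), (u - m) ^ 2 * rho V b c u) +
       (∫ u in Ici (m + T), (u - m) ^ 2 * rho V b c u)) ≤
      T ^ 2 + ((32 / (q - p) ^ 2 + 2 * T ^ 2) * (2 / (q - p)) +
        (32 / (q - p) ^ 2 + 2 * T ^ 2) * (2 / (q - p))) :=
    add_le_add hmid (add_le_add hright hright)
  refine htotal.trans ?_
  have hne : q - p ≠ 0 := hα.ne'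
  have hTle : T ≤ (R + 1) * (|b - c| + 1) := by rw [hTdef]; nlinarith
  have hT2 : T ^ 2 ≤ (R + 1) ^ 2 * (|b - c| + 1) ^ 2 := by
    calc T ^ 2 ≤ ((R + 1) * (|b - c| + 1)) ^ 2 := by
          apply pow_le_pow_left₀ hT0.le hTle
      _ = (R + 1) ^ 2 * (|b - c| + 1) ^ 2 := by ring
  have h1d : (1:ℝ) ≤ (|b - c| + 1) ^ 2 := by nlinarith
  have e_lhs : T ^ 2 + ((32 / (q - p) ^ 2 + 2 * T ^ 2) * (2 / (q - p)) +
      (32 / (q - p) ^ 2 + 2 * T ^ 2) * (2 / (q - p))) =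
      T ^ 2 * (1 + 8 / (q - p)) + 128 / (q - p) ^ 3 := by
    field_simp
    ring
  rw [e_lhs]
  have b1 : T ^ 2 * (1 + 8 / (q - p)) ≤
      (R + 1) ^ 2 * (|b - c| + 1) ^ 2 * (1 + 8 / (q - p)) :=
    mul_le_mul_of_nonneg_right hT2 (by positivity)
  have b2 : 128 / (q - p) ^ 3 ≤ 128 / (q - p) ^ 3 * (|b - c| + 1) ^ 2 :=
    le_mul_of_one_le_right (by positivity) h1d
  calc T ^ 2 * (1 + 8 / (q - p)) + 128 / (q - p) ^ 3
      ≤ (R + 1) ^ 2 * (|b - c| + 1) ^ 2 * (1 + 8 / (q - p)) +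
        128 / (q - p) ^ 3 * (|b - c| + 1) ^ 2 := add_le_add b1 b2
    _ = ((R + 1) ^ 2 * (1 + 8 / (q - p)) + 128 / (q - p) ^ 3) * (|b - c| + 1) ^ 2 := by ring


end Core



lemma exists_slopes {V : ℝ → ℝ} (hV : InClassC V) :
    ∃ p q R : ℝ, p < q ∧ 1 ≤ R ∧
      (∀ x y : ℝ, R ≤ x → x ≤ y → q * (y - x) ≤ V y - V x) ∧
      (∀ x y : ℝ, y ≤ x → x ≤ -R → p * (y - x) ≤ V y - V x) := by
  obtain ⟨vm, vp, hbot, htop, hlt⟩ := hV.slopes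
  obtain ⟨r, hr1, hr2⟩ := EReal.exists_between_coe_real hlt
  obtain ⟨q', hq'1, hq'2⟩ := EReal.exists_between_coe_real hr2
  obtain ⟨p', hp'1, hp'2⟩ := EReal.exists_between_coe_real hr1
  have hrq' : r < q' := by exact_mod_cast hq'1
  have hp'r : p' < r := by exact_mod_cast hp'2
  set q : ℝ := (r + q') / 2 with hq_def
  set p : ℝ := (p' + r) / 2 with hp_def
  have hpq : p < q := by simp only [hq_def, hp_def]; linarith
  have hqq' : q < q' := by simp only [hq_def]; linarith
  have hp'p : p' < p := by simp only [hp_def]; linarith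
  -- eventual bounds
  have hev_top : ∀ᶠ x : ℝ in atTop, (q' : ℝ) < V x / x := by
    have h := htop.eventually_const_lt hq'2
    filter_upwards [h] with x hx
    exact_mod_cast hx
  have hev_bot : ∀ᶠ x : ℝ in atBot, V x / x < (p' : ℝ) := by
    have h := hbot.eventually_lt_const hp'1
    filter_upwards [h] with x hx
    exact_mod_cast hx
  obtain ⟨R0, hR0⟩ := eventually_atTop.mp hev_top
  obtain ⟨R1, hR1⟩ := eventually_atBot.mp hev_bot
  set R : ℝ := max 1 (max (max R0 (-R1)) (max (|V 0| / (q' - q)) (|V 0| / (p - p')))) with hR_def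
  have hR1' : 1 ≤ R := le_max_left _ _
  refine ⟨p, q, R, hpq, hR1', ?_, ?_⟩
  · intro x y hx hxy
    rcases eq_or_lt_of_le hxy with rfl | hlt'
    · simp
    have hx1 : 1 ≤ x := le_trans (le_trans (le_max_left _ _) hx) le_rfl
    have hx0 : 0 < x := by linarith
    have hxR0 : R0 ≤ x :=
      le_trans (le_trans (le_max_left R0 (-R1)) (le_trans (le_max_left _ _) (le_max_right 1 _))) hx
    have hxq : q' < V x / x := hR0 x hxR0
    have hVxlb : q' * x < V x := (lt_div_iff₀ hx0).mp hxq
    have hxV0 : |V 0| / (q' - q) ≤ x :=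
      le_trans (le_trans (le_trans (le_max_left _ _) (le_max_right (max R0 (-R1)) _))
        (le_max_right 1 _)) hx
    have hV0 : |V 0| ≤ (q' - q) * x := by
      rw [div_le_iff₀ (by linarith : (0:ℝ) < q' - q)] at hxV0
      linarith [hxV0]
    have hslope0 : q ≤ (V x - V 0) / x := by
      rw [le_div_iff₀ hx0]
      have := le_abs_self (V 0)
      nlinarith
    have hsec := hV.convex.secant_mono (a := x) (x := (0:ℝ)) (y := y)
      (Set.mem_univ _) (Set.mem_univ _) (Set.mem_univ _) hx0.ne hlt'.ne' (by linarith)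
    rw [zero_sub, div_neg, ← neg_div, neg_sub] at hsec
    have : q ≤ (V y - V x) / (y - x) := le_trans hslope0 hsec
    rw [le_div_iff₀ (by linarith : (0:ℝ) < y - x)] at this
    exact this
  · intro x y hyx hxR
    rcases eq_or_lt_of_le hyx with rfl | hlt'
    · simp
    have hRx : R ≤ -x := by linarith
    have hx1 : x ≤ -1 := by
      have := le_trans (le_max_left 1 _) hRx; linarith
    have hx0 : x < 0 := by linarith
    have hxR1 : x ≤ R1 := by
      have : -R1 ≤ R := le_trans (le_max_right R0 (-R1)) (le_trans (le_max_left _ _) (le_max_right 1 _))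
      linarith [le_trans this hRx]
    have hxp : V x / x < p' := hR1 x hxR1
    have hVxlb : p' * x < V x := by
      rw [div_lt_iff_of_neg hx0] at hxp
      linarith
    have hxV0 : |V 0| / (p - p') ≤ -x := by
      have : |V 0| / (p - p') ≤ R :=
        le_trans (le_trans (le_max_right _ _) (le_max_right (max R0 (-R1)) _)) (le_max_right 1 _)
      linarith [le_trans this hRx]
    have hV0 : |V 0| ≤ (p - p') * (-x) := by
      rw [div_le_iff₀ (by linarith : (0:ℝ) < p - p')] at hxV0
      linarith
    have hslope0 : (V x - V 0) / x ≤ p := by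
      rw [div_le_iff_of_neg hx0]
      have := le_abs_self (V 0)
      nlinarith
    have hsec := hV.convex.secant_mono (a := x) (x := y) (y := (0:ℝ))
      (Set.mem_univ _) (Set.mem_univ _) (Set.mem_univ _) hlt'.ne hx0.ne' (by linarith)
    rw [zero_sub, div_neg, ← neg_div, neg_sub] at hsec
    have : (V y - V x) / (y - x) ≤ p := le_trans hsec hslope0
    rw [div_le_iff_of_neg (by linarith : y - x < 0)] at this
    linarith
end RSAux

/-- **Exponential tails and variance of the resampling density.** For `V ∈ 𝒞` there are
`α, C > 0` such that for all `s ≥ 0` and `b, c`: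
`∫_{max(b,c)+s}^∞ ρ_{b,c} ≤ C e^{-αs}` and `∫_{-∞}^{min(b,c)-s} ρ_{b,c} ≤ C e^{-αs}`; moreover
there is `C' > 0` with `∫ (u-(b+c)/2)² ρ_{b,c}(u) du ≤ C' (|b-c|+1)²`. -/
theorem resampling_density_tails (V : ℝ → ℝ) (hV : InClassC V) :
    (∃ α > (0 : ℝ), ∃ C > (0 : ℝ), ∀ s : ℝ, 0 ≤ s → ∀ b c : ℝ,
      (∫ u in Set.Ici (max b c + s), rho V b c u) ≤ C * Real.exp (-α * s) ∧
      (∫ u in Set.Iic (min b c - s), rho V b c u) ≤ C * Real.exp (-α * s)) ∧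
    (∃ C' > (0 : ℝ), ∀ b c : ℝ,
      (∫ u : ℝ, (u - (b + c) / 2) ^ 2 * rho V b c u) ≤ C' * (|b - c| + 1) ^ 2) := by
  have hc : Continuous V := by
    have h := hV.convex.continuousOn isOpen_univ
    rwa [continuousOn_univ] at h
  obtain ⟨p, q, R, hpq, hR, Hq, Hp⟩ := RSAux.exists_slopes hV
  have hα : 0 < q - p := sub_pos.mpr hpq
  constructor
  · refine ⟨q - p, hα, (1 + 1 / (q - p)) * Real.exp ((q - p) * (R + 1)), by positivity,
      fun s hs b c => ?_⟩
    refine ⟨RSAux.tail_right Hq Hp hc hpq hR b c hs, ?_⟩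
    rw [RSAux.tail_left_eq]
    exact RSAux.tail_right Hq Hp hc hpq hR b c hs
  · exact ⟨(R + 1) ^ 2 * (1 + 8 / (q - p)) + 128 / (q - p) ^ 3, by positivity,
      fun b c => RSAux.variance_bound Hq Hp hc hpq hR b c⟩

end
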